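/- arXiv:1605.05724 — 6 statements merged into one kernel-verified Lean document; each statement's English description precedes it below -/
import Mathlib

section
/- Let C be a conjugation on a complex Hilbert space H and h, g ∈ H. If for every skew-C symmetric operator T one has ⟨Th, Cg⟩ = 0, then h and g are linearly dependent. Consequently every rank-one operator annihilating all skew-C symmetric operators has the form α·(h ⊗ Ch) for some h ∈ H and α ∈ ℂ. -/
open scoped InnerProductSpace ComplexConjugate

/-- The rank-one operator `x ⊗ y`, acting by `z ↦ ⟨z, y⟩ • x`. -/
noncomputable def rankOne {H : Type*} [NormedAddCommGroup H] [InnerProductSpace ℂ H]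
    (x y : H) : H →L[ℂ] H :=
  (ContinuousLinearMap.toSpanSingleton ℂ x).comp (innerSL ℂ y)

lemma rankOne_apply {H : Type*} [NormedAddCommGroup H] [InnerProductSpace ℂ H]
    (x y z : H) : rankOne x y z = ⟪y, z⟫_ℂ • x := rfl

lemma rankOne_adjoint {H : Type*} [NormedAddCommGroup H] [InnerProductSpace ℂ H]
    [CompleteSpace H] (x y : H) :
    ContinuousLinearMap.adjoint (rankOne x y) = rankOne y x := by
  symm
  rw [ContinuousLinearMap.eq_adjoint_iff]
  intro u v
  simp only [rankOne_apply, inner_smul_left, inner_smul_right, inner_conj_symm]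
  ring

lemma key_fact {H : Type*} [NormedAddCommGroup H] [InnerProductSpace ℂ H] [CompleteSpace H]
    (C : H → H)
    (hCadd : ∀ x y, C (x + y) = C x + C y)
    (hCsmul : ∀ (a : ℂ) (x : H), C (a • x) = (starRingEnd ℂ) a • C x)
    (hCinner : ∀ x y : H, ⟪C x, C y⟫_ℂ = ⟪y, x⟫_ℂ)
    (hCinv : ∀ x, C (C x) = x)
    (h g : H)
    (hann : ∀ T : H →L[ℂ] H,
      (∀ z, C (T (C z)) = -(ContinuousLinearMap.adjoint T) z) → ⟪C g, T h⟫_ℂ = 0) :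
    ⟪h, h⟫_ℂ • g = ⟪h, g⟫_ℂ • h := by
  have hCsub : ∀ x y, C (x - y) = C x - C y := by
    intro x y
    have h1 : x - y = x + (-1 : ℂ) • y := by
      rw [neg_one_smul]; abel
    rw [h1, hCadd, hCsmul]
    simp [sub_eq_add_neg]
  -- main identity: ∀ a b, ⟪a, h⟫ * ⟪b, g⟫ = ⟪b, h⟫ * ⟪a, g⟫
  have key : ∀ a b : H, ⟪a, h⟫_ℂ * ⟪b, g⟫_ℂ = ⟪b, h⟫_ℂ * ⟪a, g⟫_ℂ := by
    intro a b
    set T : H →L[ℂ] H := rankOne (C b) a - rankOne (C a) b with hT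
    have hskew : ∀ z, C (T (C z)) = -(ContinuousLinearMap.adjoint T) z := by
      intro z
      have hadj : ContinuousLinearMap.adjoint T = rankOne a (C b) - rankOne b (C a) := by
        rw [hT, map_sub, rankOne_adjoint, rankOne_adjoint]
      have e1 : ∀ u : H, (starRingEnd ℂ) ⟪u, C z⟫_ℂ = ⟪C u, z⟫_ℂ := by
        intro u
        rw [inner_conj_symm]
        calc ⟪C z, u⟫_ℂ = ⟪C z, C (C u)⟫_ℂ := by rw [hCinv]
          _ = ⟪C u, z⟫_ℂ := hCinner _ _
      rw [hadj]
      simp only [hT, ContinuousLinearMap.sub_apply, ContinuousLinearMap.neg_apply,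
        rankOne_apply]
      rw [hCsub, hCsmul, hCsmul, hCinv, hCinv, e1, e1]
      abel
    have h0 := hann T hskew
    simp only [hT, ContinuousLinearMap.sub_apply, rankOne_apply, inner_sub_right,
      inner_smul_right] at h0
    have e1 : ⟪C g, C b⟫_ℂ = ⟪b, g⟫_ℂ := hCinner g b
    have e2 : ⟪C g, C a⟫_ℂ = ⟪a, g⟫_ℂ := hCinner g a
    rw [e1, e2] at h0
    linear_combination h0
  -- specialize a := h
  have key2 : ∀ b : H, ⟪b, ⟪h, h⟫_ℂ • g - ⟪h, g⟫_ℂ • h⟫_ℂ = 0 := by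
    intro b
    rw [inner_sub_right, inner_smul_right, inner_smul_right]
    have := key h b
    ring_nf
    linear_combination key h b
  have hv : ⟪h, h⟫_ℂ • g - ⟪h, g⟫_ℂ • h = 0 := by
    have := key2 (⟪h, h⟫_ℂ • g - ⟪h, g⟫_ℂ • h)
    exact inner_self_eq_zero.mp this
  exact sub_eq_zero.mp hv

theorem stmt4 {H : Type*} [NormedAddCommGroup H] [InnerProductSpace ℂ H] [CompleteSpace H]
    (C : H → H)
    (hCadd : ∀ x y, C (x + y) = C x + C y)
    (hCsmul : ∀ (a : ℂ) (x : H), C (a • x) = (starRingEnd ℂ) a • C x)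
    (hCinner : ∀ x y : H, ⟪C x, C y⟫_ℂ = ⟪y, x⟫_ℂ)
    (hCinv : ∀ x, C (C x) = x)
    (h g : H)
    (hann : ∀ T : H →L[ℂ] H,
      (∀ z, C (T (C z)) = -(ContinuousLinearMap.adjoint T) z) → ⟪C g, T h⟫_ℂ = 0) :
    ¬ LinearIndependent ℂ ![h, g] ∧
      ∀ x y : H,
        (∀ T : H →L[ℂ] H,
            (∀ z, C (T (C z)) = -(ContinuousLinearMap.adjoint T) z) → ⟪y, T x⟫_ℂ = 0) →
          ∃ (α : ℂ) (w : H), rankOne x y = α • rankOne w (C w) := by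
  constructor
  · intro li
    have hh : h ≠ 0 := by
      have := li.ne_zero 0
      simpa using this
    have hg2 := linearIndependent_fin2.mp li
    have hg0 : g ≠ 0 := by simpa using hg2.1
    have h2 : ∀ a : ℂ, a • g ≠ h := by
      intro a
      have := hg2.2 a
      simpa using this
    have hv := key_fact C hCadd hCsmul hCinner hCinv h g hann
    have hhh : ⟪h, h⟫_ℂ ≠ 0 := inner_self_ne_zero.mpr hh
    by_cases hgz : ⟪h, g⟫_ℂ = 0
    · apply hg0
      rw [hgz, zero_smul] at hv
      exact (smul_eq_zero.mp hv).resolve_left hhh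
    · exact h2 (⟪h, h⟫_ℂ / ⟪h, g⟫_ℂ)
        (by rw [div_eq_inv_mul, mul_smul, hv, smul_smul, inv_mul_cancel₀ hgz, one_smul])
  · intro x y hxy
    have hann2 : ∀ T : H →L[ℂ] H,
        (∀ z, C (T (C z)) = -(ContinuousLinearMap.adjoint T) z) → ⟪C (C y), T x⟫_ℂ = 0 := by
      intro T hT
      rw [hCinv]
      exact hxy T hT
    have hv := key_fact C hCadd hCsmul hCinner hCinv x (C y) hann2
    by_cases hx : x = 0
    · refine ⟨0, 0, ?_⟩
      ext z
      simp [rankOne_apply, hx]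
    · have hxx : ⟪x, x⟫_ℂ ≠ 0 := inner_self_ne_zero.mpr hx
      have hCy : C y = (⟪x, C y⟫_ℂ / ⟪x, x⟫_ℂ) • x := by
        rw [div_eq_inv_mul, mul_smul, ← hv, smul_smul, inv_mul_cancel₀ hxx, one_smul]
      obtain ⟨c, hCy⟩ : ∃ c : ℂ, C y = c • x := ⟨_, hCy⟩
      have hy : y = (starRingEnd ℂ) c • C x := by
        conv_lhs => rw [← hCinv y, hCy, hCsmul]
      refine ⟨c, x, ?_⟩
      ext z
      simp only [rankOne_apply, ContinuousLinearMap.smul_apply]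
      rw [hy, inner_smul_left]
      simp [smul_smul]
end

section
/- Let C be a conjugation on a complex Hilbert space H and T ∈ B(H). If ⟨Th, Ch⟩ = 0 for all h ∈ H, then CTC = −T*. Thus the subspace of skew-C symmetric operators is reflexive: an operator annihilated by all rank-one operators h ⊗ Ch is itself skew-C symmetric. -/
open scoped InnerProductSpace ComplexConjugate

theorem stmt7 {H : Type*} [NormedAddCommGroup H] [InnerProductSpace ℂ H] [CompleteSpace H]
    (C : H → H)
    (hCadd : ∀ x y, C (x + y) = C x + C y)
    (hCsmul : ∀ (a : ℂ) (x : H), C (a • x) = (starRingEnd ℂ) a • C x)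
    (hCinner : ∀ x y : H, ⟪C x, C y⟫_ℂ = ⟪y, x⟫_ℂ)
    (hCinv : ∀ x, C (C x) = x)
    (T : H →L[ℂ] H)
    (hT : ∀ h : H, ⟪C h, T h⟫_ℂ = 0) :
    ∀ x, C (T (C x)) = -(ContinuousLinearMap.adjoint T) x := by
  have key : ∀ a b : H, ⟪C a, T b⟫_ℂ + ⟪C b, T a⟫_ℂ = 0 := by
    intro a b
    have h := hT (a + b)
    rw [hCadd, map_add, inner_add_left, inner_add_right, inner_add_right, hT a, hT b] at h
    linear_combination h
  intro x
  refine ext_inner_right ℂ fun v => ?_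
  have h1 : ⟪C (T (C x)), v⟫_ℂ = ⟪C v, T (C x)⟫_ℂ := by
    calc ⟪C (T (C x)), v⟫_ℂ = ⟪C (T (C x)), C (C v)⟫_ℂ := by rw [hCinv]
      _ = ⟪C v, T (C x)⟫_ℂ := hCinner _ _
  have h2 : ⟪-(ContinuousLinearMap.adjoint T) x, v⟫_ℂ = -⟪C (C x), T v⟫_ℂ := by
    rw [inner_neg_left, ContinuousLinearMap.adjoint_inner_left, hCinv]
  have h3 := key (C x) v
  rw [h1, h2]
  linear_combination h3
end

section
/- Let C be a conjugation on a complex Hilbert space H and A ∈ B(H). Then dist(A, C^s) ≤ 3·sup{|⟨Ah, Ch⟩| : ‖h‖ ≤ 1}, i.e., the subspace of skew-C symmetric operators is hyperreflexive with constant at most 3. -/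
open scoped InnerProductSpace ComplexConjugate

theorem stmt12 {H : Type*} [NormedAddCommGroup H] [InnerProductSpace ℂ H] [CompleteSpace H]
    (C : H → H)
    (hCadd : ∀ x y, C (x + y) = C x + C y)
    (hCsmul : ∀ (a : ℂ) (x : H), C (a • x) = (starRingEnd ℂ) a • C x)
    (hCinner : ∀ x y : H, ⟪C x, C y⟫_ℂ = ⟪y, x⟫_ℂ)
    (hCinv : ∀ x, C (C x) = x)
    (A : H →L[ℂ] H) :
    Metric.infDist A
        {T : H →L[ℂ] H | ∀ x, C (T (C x)) = -(ContinuousLinearMap.adjoint T) x} ≤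
      3 * sSup {r : ℝ | ∃ h : H, ‖h‖ ≤ 1 ∧ r = ‖⟪C h, A h⟫_ℂ‖} := by
  classical
  set A' := ContinuousLinearMap.adjoint A with hA'
  have hC0 : C 0 = 0 := by have := hCsmul 0 0; simpa using this
  have hCneg : ∀ x, C (-x) = -(C x) := by
    intro x; have := hCsmul (-1) x; simpa using this
  have hCsub : ∀ x y, C (x - y) = C x - C y := by
    intro x y; rw [sub_eq_add_neg, hCadd, hCneg, sub_eq_add_neg]
  have hCnorm : ∀ x, ‖C x‖ = ‖x‖ := by
    intro x
    rw [norm_eq_sqrt_re_inner (𝕜 := ℂ) x, norm_eq_sqrt_re_inner (𝕜 := ℂ) (C x), hCinner x x]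
  -- the operator G = C A* C
  let Gl : H →ₗ[ℂ] H :=
    { toFun := fun x => C (A' (C x))
      map_add' := fun x y => by simp only [hCadd, map_add]
      map_smul' := fun a x => by
        simp only [hCsmul, map_smul, RingHom.id_apply, RingHomCompTriple.comp_apply,
          Complex.conj_conj] }
  have hGl : ∀ x, ‖Gl x‖ ≤ ‖A'‖ * ‖x‖ := by
    intro x
    show ‖C (A' (C x))‖ ≤ _
    rw [hCnorm, ← hCnorm x]
    exact A'.le_opNorm (C x)
  let G : H →L[ℂ] H := Gl.mkContinuous ‖A'‖ hGl
  have hGapp : ∀ x, G x = C (A' (C x)) := fun _ => rfl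
  -- the operator F = C A C
  let Fl : H →ₗ[ℂ] H :=
    { toFun := fun x => C (A (C x))
      map_add' := fun x y => by simp only [hCadd, map_add]
      map_smul' := fun a x => by
        simp only [hCsmul, map_smul, RingHom.id_apply, RingHomCompTriple.comp_apply,
          Complex.conj_conj] }
  have hFl : ∀ x, ‖Fl x‖ ≤ ‖A‖ * ‖x‖ := by
    intro x
    show ‖C (A (C x))‖ ≤ _
    rw [hCnorm, ← hCnorm x]
    exact A.le_opNorm (C x)
  let F : H →L[ℂ] H := Fl.mkContinuous ‖A‖ hFl
  have hFapp : ∀ x, F x = C (A (C x)) := fun _ => rfl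
  -- F is the adjoint of G
  have hFadj : F = ContinuousLinearMap.adjoint G := by
    rw [ContinuousLinearMap.eq_adjoint_iff]
    intro x y
    rw [hFapp, hGapp]
    calc ⟪C (A (C x)), y⟫_ℂ = ⟪C (A (C x)), C (C y)⟫_ℂ := by rw [hCinv]
      _ = ⟪C y, A (C x)⟫_ℂ := hCinner _ _
      _ = ⟪A' (C y), C x⟫_ℂ := by
            rw [hA']
            exact (ContinuousLinearMap.adjoint_inner_left A (C x) (C y)).symm
      _ = ⟪C (C (A' (C y))), C x⟫_ℂ := by rw [hCinv]
      _ = ⟪x, C (A' (C y))⟫_ℂ := hCinner _ _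
  -- the decomposition A = T + S
  set S : H →L[ℂ] H := (2⁻¹ : ℂ) • (A + G) with hS
  set T : H →L[ℂ] H := A - S with hTdef
  have hT : T = (2⁻¹ : ℂ) • (A - G) := by
    rw [hTdef, hS]
    ext x
    simp only [ContinuousLinearMap.sub_apply, ContinuousLinearMap.smul_apply,
      ContinuousLinearMap.add_apply, smul_add, smul_sub]
    module
  have hconj2 : (starRingEnd ℂ) (2⁻¹ : ℂ) = (2⁻¹ : ℂ) := by
    rw [map_inv₀, Complex.conj_ofNat]
  have hTadj : (2⁻¹ : ℂ) • (A' - F) = ContinuousLinearMap.adjoint T := by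
    rw [ContinuousLinearMap.eq_adjoint_iff]
    intro x y
    rw [hT]
    simp only [ContinuousLinearMap.smul_apply, ContinuousLinearMap.sub_apply,
      inner_smul_left, inner_smul_right, inner_sub_left, inner_sub_right, hconj2]
    congr 1
    rw [hA', ContinuousLinearMap.adjoint_inner_left A y x, hFadj,
      ContinuousLinearMap.adjoint_inner_left G y x]
  have hmem : T ∈ {T : H →L[ℂ] H | ∀ x, C (T (C x)) = -(ContinuousLinearMap.adjoint T) x} := by
    intro x
    rw [← hTadj]
    have hTx : T (C x) = (2⁻¹ : ℂ) • (A (C x) - C (A' x)) := by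
      rw [hT]
      simp only [ContinuousLinearMap.smul_apply, ContinuousLinearMap.sub_apply, hGapp, hCinv]
    rw [hTx, hCsmul, hconj2, hCsub, hCinv]
    simp only [ContinuousLinearMap.neg_apply, ContinuousLinearMap.smul_apply,
      ContinuousLinearMap.sub_apply, hFapp]
    rw [smul_sub, smul_sub, neg_sub]
  -- the bound
  set β := sSup {r : ℝ | ∃ h : H, ‖h‖ ≤ 1 ∧ r = ‖⟪C h, A h⟫_ℂ‖} with hβ
  have hbdd : BddAbove {r : ℝ | ∃ h : H, ‖h‖ ≤ 1 ∧ r = ‖⟪C h, A h⟫_ℂ‖} := by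
    refine ⟨‖A‖, ?_⟩
    rintro r ⟨h, hh, rfl⟩
    calc ‖⟪C h, A h⟫_ℂ‖ ≤ ‖C h‖ * ‖A h‖ := norm_inner_le_norm _ _
      _ ≤ 1 * (‖A‖ * 1) := by
        refine mul_le_mul ?_ ?_ (norm_nonneg _) zero_le_one
        · rw [hCnorm]; exact hh
        · calc ‖A h‖ ≤ ‖A‖ * ‖h‖ := A.le_opNorm h
            _ ≤ ‖A‖ * 1 := by
              exact mul_le_mul_of_nonneg_left hh (norm_nonneg _)
      _ = ‖A‖ := by ring
  have hβ0 : 0 ≤ β := by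
    refine le_csSup hbdd ⟨0, by simp, ?_⟩
    simp [hC0]
  have hq : ∀ h : H, ‖⟪C h, A h⟫_ℂ‖ ≤ β * ‖h‖ ^ 2 := by
    intro h
    rcases eq_or_ne h 0 with rfl | hne
    · simp [hC0]
    · have hn : (0:ℝ) < ‖h‖ := norm_pos_iff.mpr hne
      set c : ℂ := (‖h‖ : ℂ) with hc
      have hc0 : c ≠ 0 := by
        simp [hc, Complex.ofReal_ne_zero, hn.ne']
      set u : H := c⁻¹ • h with hu
      have hun : ‖u‖ = 1 := by
        rw [hu, norm_smul, norm_inv, hc, Complex.norm_real, Real.norm_of_nonneg hn.le,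
          inv_mul_cancel₀ hn.ne']
      have hhu : h = c • u := by rw [hu, smul_inv_smul₀ hc0]
      have hmem' : ‖⟪C u, A u⟫_ℂ‖ ≤ β :=
        le_csSup hbdd ⟨u, hun.le, rfl⟩
      have hexp : ⟪C h, A h⟫_ℂ = c * c * ⟪C u, A u⟫_ℂ := by
        rw [hhu, hCsmul, map_smul, inner_smul_left, inner_smul_right, Complex.conj_conj]
        ring
      rw [hexp, norm_mul, norm_mul]
      have habs : ‖c‖ = ‖h‖ := by
        rw [hc, Complex.norm_real, Real.norm_of_nonneg hn.le]
      rw [habs]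
      calc ‖h‖ * ‖h‖ * ‖⟪C u, A u⟫_ℂ‖ ≤ ‖h‖ * ‖h‖ * β := by
            exact mul_le_mul_of_nonneg_left hmem' (by positivity)
        _ = β * ‖h‖ ^ 2 := by ring
  -- the symmetric form
  have hSform : ∀ x y : H, ⟪C y, S x⟫_ℂ = (⟪C y, A x⟫_ℂ + ⟪C x, A y⟫_ℂ) / 2 := by
    intro x y
    rw [hS]
    simp only [ContinuousLinearMap.smul_apply, ContinuousLinearMap.add_apply,
      inner_smul_right, inner_add_right]
    have : ⟪C y, G x⟫_ℂ = ⟪C x, A y⟫_ℂ := by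
      rw [hGapp]
      calc ⟪C y, C (A' (C x))⟫_ℂ = ⟪A' (C x), y⟫_ℂ := hCinner _ _
        _ = ⟪C x, A y⟫_ℂ := by
            rw [hA']
            exact ContinuousLinearMap.adjoint_inner_left A y (C x)
    rw [this]
    ring
  have hpol : ∀ x y : H,
      ⟪C y, S x⟫_ℂ = (⟪C (x + y), A (x + y)⟫_ℂ - ⟪C (x - y), A (x - y)⟫_ℂ) / 4 := by
    intro x y
    rw [hSform, hCadd, hCsub, map_add, map_sub, inner_add_left, inner_add_right,
      inner_add_right, inner_sub_left, inner_sub_right, inner_sub_right]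
    ring
  have hkey : ∀ x y : H, ‖⟪C y, S x⟫_ℂ‖ ≤ β / 2 * (‖x‖ ^ 2 + ‖y‖ ^ 2) := by
    intro x y
    rw [hpol]
    calc ‖(⟪C (x + y), A (x + y)⟫_ℂ - ⟪C (x - y), A (x - y)⟫_ℂ) / 4‖
        = ‖⟪C (x + y), A (x + y)⟫_ℂ - ⟪C (x - y), A (x - y)⟫_ℂ‖ / 4 := by
          rw [norm_div]; norm_num
      _ ≤ (‖⟪C (x + y), A (x + y)⟫_ℂ‖ + ‖⟪C (x - y), A (x - y)⟫_ℂ‖) / 4 := by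
          have := norm_sub_le ⟪C (x + y), A (x + y)⟫_ℂ ⟪C (x - y), A (x - y)⟫_ℂ
          linarith
      _ ≤ (β * ‖x + y‖ ^ 2 + β * ‖x - y‖ ^ 2) / 4 := by
          have h1 := hq (x + y)
          have h2 := hq (x - y)
          linarith
      _ = β / 4 * (‖x + y‖ * ‖x + y‖ + ‖x - y‖ * ‖x - y‖) := by ring
      _ = β / 4 * (2 * (‖x‖ * ‖x‖ + ‖y‖ * ‖y‖)) := by
          linear_combination (β / 4) * parallelogram_law_with_norm ℂ x y
      _ = β / 2 * (‖x‖ ^ 2 + ‖y‖ ^ 2) := by ring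
  have hSle : ‖S‖ ≤ β := by
    refine ContinuousLinearMap.opNorm_le_bound _ hβ0 fun x => ?_
    by_cases hx : S x = 0
    · rw [hx, norm_zero]; positivity
    · have hx0 : x ≠ 0 := by
        rintro rfl; exact hx (map_zero S)
      have hxp : (0:ℝ) < ‖x‖ := norm_pos_iff.mpr hx0
      have hSxp : (0:ℝ) < ‖S x‖ := norm_pos_iff.mpr hx
      set r : ℝ := ‖x‖ / ‖S x‖ with hr
      have hrp : (0:ℝ) < r := div_pos hxp hSxp
      set y : H := ((r : ℂ)) • C (S x) with hy
      have hyn : ‖y‖ = ‖x‖ := by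
        rw [hy, norm_smul, Complex.norm_real, Real.norm_of_nonneg hrp.le, hCnorm, hr,
          div_mul_cancel₀ _ hSxp.ne']
      have hCy : C y = (r : ℂ) • S x := by
        rw [hy, hCsmul, hCinv, Complex.conj_ofReal]
      have hval : ‖⟪C y, S x⟫_ℂ‖ = ‖x‖ * ‖S x‖ := by
        have hinner : ⟪S x, S x⟫_ℂ = ((‖S x‖ : ℝ) : ℂ) ^ 2 :=
          inner_self_eq_norm_sq_to_K (𝕜 := ℂ) (S x)
        rw [hCy, inner_smul_left, Complex.conj_ofReal, hinner, norm_mul, norm_pow,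
          Complex.norm_real, Complex.norm_real, Real.norm_of_nonneg hrp.le,
          Real.norm_of_nonneg (norm_nonneg _), hr]
        field_simp
      have := hkey x y
      rw [hval, hyn] at this
      have h2 : ‖x‖ * ‖S x‖ ≤ β * ‖x‖ ^ 2 := by
        calc ‖x‖ * ‖S x‖ ≤ β / 2 * (‖x‖ ^ 2 + ‖x‖ ^ 2) := this
          _ = β * ‖x‖ ^ 2 := by ring
      have h3 : ‖x‖ * ‖S x‖ ≤ ‖x‖ * (β * ‖x‖) := by
        calc ‖x‖ * ‖S x‖ ≤ β * ‖x‖ ^ 2 := h2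
          _ = ‖x‖ * (β * ‖x‖) := by ring
      exact le_of_mul_le_mul_left h3 hxp
  calc Metric.infDist A {T : H →L[ℂ] H | ∀ x, C (T (C x)) = -(ContinuousLinearMap.adjoint T) x}
      ≤ dist A T := Metric.infDist_le_dist_of_mem hmem
    _ = ‖S‖ := by rw [dist_eq_norm, hTdef, sub_sub_cancel]
    _ ≤ β := hSle
    _ ≤ 3 * β := by linarith
end

section
/- Let C be a conjugation on a complex Hilbert space H and A ∈ B(H). Then ‖A + CA*C‖ ≤ sup{|⟨Ah, Ch⟩| + |⟨Ag, Cg⟩| + 4|⟨A((h+g)/2), C((h+g)/2)⟩| : ‖h‖ ≤ 1, ‖g‖ ≤ 1} ≤ 6·sup{|⟨Ah, Ch⟩| : ‖h‖ ≤ 1}. -/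
open scoped InnerProductSpace ComplexConjugate

theorem stmt13 {H : Type*} [NormedAddCommGroup H] [InnerProductSpace ℂ H] [CompleteSpace H]
    (C : H → H)
    (hCadd : ∀ x y, C (x + y) = C x + C y)
    (hCsmul : ∀ (a : ℂ) (x : H), C (a • x) = (starRingEnd ℂ) a • C x)
    (hCinner : ∀ x y : H, ⟪C x, C y⟫_ℂ = ⟪y, x⟫_ℂ)
    (hCinv : ∀ x, C (C x) = x)
    (A M : H →L[ℂ] H)
    (hM : ∀ x, M x = A x + C ((ContinuousLinearMap.adjoint A) (C x))) :
    ‖M‖ ≤ sSup {r : ℝ | ∃ h g : H, ‖h‖ ≤ 1 ∧ ‖g‖ ≤ 1 ∧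
        r = ‖⟪C h, A h⟫_ℂ‖ + ‖⟪C g, A g⟫_ℂ‖ +
          4 * ‖⟪C ((1/2 : ℂ) • (h + g)), A ((1/2 : ℂ) • (h + g))⟫_ℂ‖} ∧
      sSup {r : ℝ | ∃ h g : H, ‖h‖ ≤ 1 ∧ ‖g‖ ≤ 1 ∧
        r = ‖⟪C h, A h⟫_ℂ‖ + ‖⟪C g, A g⟫_ℂ‖ +
          4 * ‖⟪C ((1/2 : ℂ) • (h + g)), A ((1/2 : ℂ) • (h + g))⟫_ℂ‖} ≤
      6 * sSup {r : ℝ | ∃ h : H, ‖h‖ ≤ 1 ∧ r = ‖⟪C h, A h⟫_ℂ‖} := by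
  set S : Set ℝ := {r : ℝ | ∃ h g : H, ‖h‖ ≤ 1 ∧ ‖g‖ ≤ 1 ∧
        r = ‖⟪C h, A h⟫_ℂ‖ + ‖⟪C g, A g⟫_ℂ‖ +
          4 * ‖⟪C ((1/2 : ℂ) • (h + g)), A ((1/2 : ℂ) • (h + g))⟫_ℂ‖} with hS
  set T : Set ℝ := {r : ℝ | ∃ h : H, ‖h‖ ≤ 1 ∧ r = ‖⟪C h, A h⟫_ℂ‖} with hT
  have hC0 : C 0 = 0 := by simpa using hCsmul 0 0
  have hCnorm : ∀ x : H, ‖C x‖ = ‖x‖ := by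
    intro x
    have h1 : ⟪C x, C x⟫_ℂ = ⟪x, x⟫_ℂ := hCinner x x
    have h2 : (inner ℂ (C x) (C x) : ℂ) = ((‖C x‖ : ℂ)) ^ 2 := inner_self_eq_norm_sq_to_K (C x)
    have h2' : (inner ℂ x x : ℂ) = ((‖x‖ : ℂ)) ^ 2 := inner_self_eq_norm_sq_to_K x
    have h3 : ‖C x‖ ^ 2 = ‖x‖ ^ 2 := by
      have := h2.symm.trans (h1.trans h2')
      exact_mod_cast this
    nlinarith [norm_nonneg (C x), norm_nonneg x]
  -- The key identity
  have hB : ∀ h g : H, ⟪C h, M g⟫_ℂ =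
      4 * ⟪C ((1/2 : ℂ) • (h + g)), A ((1/2 : ℂ) • (h + g))⟫_ℂ
        - ⟪C h, A h⟫_ℂ - ⟪C g, A g⟫_ℂ := by
    intro h g
    have hadj : ⟪C h, C ((ContinuousLinearMap.adjoint A) (C g))⟫_ℂ = ⟪C g, A h⟫_ℂ := by
      rw [hCinner, ContinuousLinearMap.adjoint_inner_left]
    rw [hM, inner_add_right, hadj]
    have hc : (starRingEnd ℂ) ((1:ℂ)/2) = (1:ℂ)/2 := by
      rw [map_div₀, map_one, map_ofNat]
    rw [hCsmul, hc, map_smul, inner_smul_left, inner_smul_right, hc,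
      hCadd, map_add, inner_add_left, inner_add_right, inner_add_right]
    ring
  have hAu : ∀ u : H, ‖u‖ ≤ 1 → ‖⟪C u, A u⟫_ℂ‖ ≤ ‖A‖ := by
    intro u hu
    calc ‖⟪C u, A u⟫_ℂ‖ = ‖⟪C u, A u⟫_ℂ‖ := rfl
      _ ≤ ‖C u‖ * ‖A u‖ := norm_inner_le_norm _ _
      _ ≤ 1 * (‖A‖ * ‖u‖) := by
          apply mul_le_mul
          · rw [hCnorm]; exact hu
          · exact A.le_opNorm u
          · exact norm_nonneg _
          · exact zero_le_one
      _ ≤ 1 * (‖A‖ * 1) := by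
          apply mul_le_mul_of_nonneg_left (mul_le_mul_of_nonneg_left hu (norm_nonneg A))
          norm_num
      _ = ‖A‖ := by ring
  have hTbdd : BddAbove T := by
    refine ⟨‖A‖, ?_⟩
    rintro r ⟨h, hh, rfl⟩
    exact hAu h hh
  have hT0 : (0 : ℝ) ∈ T := ⟨0, by simp [hC0]⟩
  have hTnn : (0 : ℝ) ≤ sSup T := le_csSup hTbdd hT0
  have hSbdd : BddAbove S := by
    refine ⟨6 * ‖A‖, ?_⟩
    rintro r ⟨h, g, hh, hg, rfl⟩
    have hhalf : ‖(1/2 : ℂ) • (h + g)‖ ≤ 1 := by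
      rw [norm_smul]
      have : ‖h + g‖ ≤ 2 := le_trans (norm_add_le h g) (by linarith)
      have h12 : ‖(1/2 : ℂ)‖ = 1/2 := by norm_num
      rw [h12]; linarith
    have := hAu h hh
    have := hAu g hg
    have := hAu _ hhalf
    linarith
  have hS0 : (0 : ℝ) ∈ S := by
    refine ⟨0, 0, by simp, by simp, ?_⟩
    simp [hC0]
  have hSnn : (0 : ℝ) ≤ sSup S := le_csSup hSbdd hS0
  constructor
  · -- ‖M‖ ≤ sSup S
    have key : ∀ x g : H, ‖x‖ ≤ 1 → ‖g‖ ≤ 1 → ‖⟪x, M g⟫_ℂ‖ ≤ sSup S := by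
      intro x g hx hg
      have hx' : ‖C x‖ ≤ 1 := by rw [hCnorm]; exact hx
      have hxeq : ⟪x, M g⟫_ℂ = ⟪C (C x), M g⟫_ℂ := by rw [hCinv]
      rw [hxeq, hB (C x) g]
      set p := 4 * ⟪C ((1/2 : ℂ) • (C x + g)), A ((1/2 : ℂ) • (C x + g))⟫_ℂ
      set a := ⟪C (C x), A (C x)⟫_ℂ
      set b := ⟪C g, A g⟫_ℂ
      have t1 : ‖p - a - b‖ ≤ ‖p‖ + ‖a‖ + ‖b‖ := by
        calc ‖p - a - b‖ ≤ ‖p - a‖ + ‖b‖ := by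
              simpa [sub_eq_add_neg] using norm_add_le (p - a) (-b)
          _ ≤ ‖p‖ + ‖a‖ + ‖b‖ := by
              have : ‖p - a‖ ≤ ‖p‖ + ‖a‖ := by
                simpa [sub_eq_add_neg] using norm_add_le p (-a)
              linarith
      refine le_trans t1 ?_
      have hmem : ‖a‖ + ‖b‖ + ‖p‖ ∈ S := by
        refine ⟨C x, g, hx', hg, ?_⟩
        simp only [p, a, b, norm_mul]
        norm_num
      have := le_csSup hSbdd hmem
      linarith
    apply M.opNorm_le_bound hSnn
    intro g
    rcases eq_or_ne g 0 with rfl | hg0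
    · simp
    · have hgn : (0:ℝ) < ‖g‖ := norm_pos_iff.mpr hg0
      have hg' : ‖(‖g‖⁻¹ : ℂ) • g‖ ≤ 1 := by
        rw [norm_smul]
        simp [hgn.le, abs_of_nonneg, inv_mul_cancel₀ hgn.ne']
      set g' : H := (‖g‖⁻¹ : ℂ) • g with hg'def
      have hMg : M g = (‖g‖ : ℂ) • M g' := by
        rw [hg'def, map_smul, smul_smul]
        rw [mul_inv_cancel₀ (by exact_mod_cast hgn.ne')]
        simp
      have hMg' : ‖M g'‖ ≤ sSup S := by
        rcases eq_or_ne (M g') 0 with h0 | h0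
        · simp [h0, hSnn]
        · have hn : (0:ℝ) < ‖M g'‖ := norm_pos_iff.mpr h0
          have hxu : ‖(‖M g'‖⁻¹ : ℂ) • M g'‖ ≤ 1 := by
            rw [norm_smul]
            simp [inv_mul_cancel₀ hn.ne']
          have := key _ g' hxu hg'
          have hinner : ⟪(‖M g'‖⁻¹ : ℂ) • M g', M g'⟫_ℂ = (‖M g'‖ : ℂ) := by
            rw [inner_smul_left, inner_self_eq_norm_sq_to_K]
            rw [map_inv₀, Complex.conj_ofReal, sq]
            have hne : ((‖M g'‖ : ℝ) : ℂ) ≠ 0 := by exact_mod_cast hn.ne'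
            field_simp
            rfl
          rw [hinner] at this
          simpa using this
      calc ‖M g‖ = ‖g‖ * ‖M g'‖ := by
            rw [hMg, norm_smul]; simp
        _ ≤ ‖g‖ * sSup S := by
            exact mul_le_mul_of_nonneg_left hMg' hgn.le
        _ = sSup S * ‖g‖ := by ring
  · -- sSup S ≤ 6 * sSup T
    apply csSup_le ⟨0, hS0⟩
    rintro r ⟨h, g, hh, hg, rfl⟩
    have hhalf : ‖(1/2 : ℂ) • (h + g)‖ ≤ 1 := by
      rw [norm_smul]
      have : ‖h + g‖ ≤ 2 := le_trans (norm_add_le h g) (by linarith)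
      have h12 : ‖(1/2 : ℂ)‖ = 1/2 := by norm_num
      rw [h12]; linarith
    have m1 : ‖⟪C h, A h⟫_ℂ‖ ≤ sSup T := le_csSup hTbdd ⟨h, hh, rfl⟩
    have m2 : ‖⟪C g, A g⟫_ℂ‖ ≤ sSup T := le_csSup hTbdd ⟨g, hg, rfl⟩
    have m3 : ‖⟪C ((1/2 : ℂ) • (h + g)), A ((1/2 : ℂ) • (h + g))⟫_ℂ‖ ≤ sSup T :=
      le_csSup hTbdd ⟨_, hhalf, rfl⟩
    linarith
end

section
/- Let C̃ be the conjugation on H ⊕ H defined by C̃(f ⊕ g) = Cg ⊕ Cf, where C is a conjugation on H. An operator T ∈ B(H ⊕ H) with block matrix [[A, B],[D, E]] is skew-C̃ symmetric if and only if B and D are skew-C symmetric and E = −CA*C. -/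
open scoped InnerProductSpace ComplexConjugate

theorem stmt14 {H : Type*} [NormedAddCommGroup H] [InnerProductSpace ℂ H] [CompleteSpace H]
    (C : H → H)
    (hCadd : ∀ x y, C (x + y) = C x + C y)
    (hCsmul : ∀ (a : ℂ) (x : H), C (a • x) = (starRingEnd ℂ) a • C x)
    (hCinner : ∀ x y : H, ⟪C x, C y⟫_ℂ = ⟪y, x⟫_ℂ)
    (hCinv : ∀ x, C (C x) = x)
    (A B D E : H →L[ℂ] H) :
    -- the block operator T = [[A, B], [D, E]] on H ⊕ H is skew-C̃ symmetric,
    -- where C̃(f ⊕ g) = Cg ⊕ Cf and T* = [[A*, D*], [B*, E*]]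
    ((∀ f g : H,
        C (D (C g) + E (C f)) =
          -((ContinuousLinearMap.adjoint A) f + (ContinuousLinearMap.adjoint D) g) ∧
        C (A (C g) + B (C f)) =
          -((ContinuousLinearMap.adjoint B) f + (ContinuousLinearMap.adjoint E) g)) ↔
      ((∀ x, C (B (C x)) = -(ContinuousLinearMap.adjoint B) x) ∧
        (∀ x, C (D (C x)) = -(ContinuousLinearMap.adjoint D) x) ∧
        (∀ x, E x = -C ((ContinuousLinearMap.adjoint A) (C x))))) := by
  have hC0 : C 0 = 0 := by
    have h := hCadd 0 0
    simp only [add_zero] at h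
    exact (left_eq_add.mp h)
  have hCneg : ∀ x, C (-x) = -C x := by
    intro x
    have h : C x + C (-x) = 0 := by rw [← hCadd, add_neg_cancel, hC0]
    exact (neg_eq_of_add_eq_zero_right h).symm
  constructor
  · rintro h
    refine ⟨fun x => ?_, fun x => ?_, fun x => ?_⟩
    · have := (h x 0).2
      simpa [hC0, map_zero] using this
    · have := (h 0 x).1
      simpa [hC0, map_zero] using this
    · have := (h (C x) 0).1
      simp only [hC0, map_zero, zero_add, add_zero, hCinv] at this
      have h2 := congrArg C this
      rw [hCinv, hCneg] at h2
      rw [h2]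
  · rintro ⟨hB, hD, hE⟩ f g
    have hEadj : ∀ y, ContinuousLinearMap.adjoint E y = -C (A (C y)) := by
      intro y
      refine ext_inner_left ℂ fun v => ?_
      rw [ContinuousLinearMap.adjoint_inner_right]
      rw [hE v]
      have key2 : ∀ z w : H, ⟪C z, w⟫_ℂ = ⟪C w, z⟫_ℂ := fun z w => by
        rw [← hCinv w, hCinner, hCinv]
      rw [inner_neg_right, inner_neg_left, key2 ((ContinuousLinearMap.adjoint A) (C v)) y,
        ContinuousLinearMap.adjoint_inner_right]
      have key : ∀ z w : H, ⟪z, C w⟫_ℂ = ⟪w, C z⟫_ℂ := fun z w => by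
        rw [← hCinv z, hCinner, hCinv]
      rw [key]
    constructor
    · have h1 : C (E (C f)) = -(ContinuousLinearMap.adjoint A f) := by
        rw [hE (C f), hCinv, hCneg, hCinv]
      rw [hCadd, hD, h1, neg_add, add_comm]
    · have h2 : C (A (C g)) = -(ContinuousLinearMap.adjoint E g) := by
        rw [hEadj g, neg_neg]
      rw [hCadd, hB, h2, neg_add, add_comm]
end

section
/- Let C₁ be the conjugation on ℂ³ given by C₁(x₁, x₂, x₃) = (conj(x₃), conj(x₂), conj(x₁)). A 3×3 complex matrix T is skew-C₁ symmetric if and only if T has the form [[a, b, 0], [c, 0, −b], [0, −c, −a]] for some a, b, c ∈ ℂ. -/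
open scoped ComplexConjugate Matrix

theorem stmt15 (T : Matrix (Fin 3) (Fin 3) ℂ)
    (C₁ : (Fin 3 → ℂ) → (Fin 3 → ℂ))
    (hC₁ : ∀ (v : Fin 3 → ℂ) (i : Fin 3), C₁ v i = conj (v i.rev)) :
    (∀ v : Fin 3 → ℂ, C₁ (T.mulVec (C₁ v)) = -(Tᴴ.mulVec v)) ↔
      ∃ a b c : ℂ, T = !![a, b, 0; c, 0, -b; 0, -c, -a] := by
  constructor
  · intro h
    have key : ∀ k i : Fin 3, T i.rev k.rev = - T k i := by
      intro k i
      have h1 := congrFun (h (Pi.single k 1)) i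
      fin_cases k <;> fin_cases i <;>
        simp_all [hC₁, Matrix.mulVec, dotProduct, Fin.sum_univ_three,
          Pi.single_apply, Matrix.conjTranspose_apply, Fin.rev, map_sum] <;>
        simpa using congrArg (starRingEnd ℂ) h1
    have k00 := key 0 0
    have k01 := key 0 1
    have k10 := key 1 0
    have k02 := key 0 2
    have k11 := key 1 1
    have k20 := key 2 0
    simp only [show (0:Fin 3).rev = 2 by decide, show (1:Fin 3).rev = 1 by decide,
      show (2:Fin 3).rev = 0 by decide] at *
    have e02 : T 0 2 = 0 := by linear_combination k02 / 2
    have e11 : T 1 1 = 0 := by linear_combination k11 / 2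
    have e20 : T 2 0 = 0 := by linear_combination k20 / 2
    refine ⟨T 0 0, T 0 1, T 1 0, ?_⟩
    ext i j
    fin_cases i <;> fin_cases j <;>
      simp only [Matrix.cons_val', Matrix.cons_val_zero, Matrix.cons_val_one,
        Matrix.head_cons, Matrix.empty_val', Matrix.cons_val_fin_one,
        Matrix.head_fin_const, Matrix.of_apply, Fin.isValue] <;>
      first
        | rfl
        | exact e02 | exact e11 | exact e20
        | exact k01 | exact k10 | exact k00
  · rintro ⟨a, b, c, rfl⟩
    intro v
    funext i
    fin_cases i <;>
      simp [hC₁, Matrix.mulVec, dotProduct, Fin.sum_univ_three,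
        Matrix.conjTranspose_apply, Fin.rev, map_add, map_mul]
end
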